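/- Let F be a field and V ∈ Gr^alg(F) an element of the Sato Grassmannian. Then the Plücker coordinate at the partition κ(V) of V equals 1, and if a partition λ satisfies P_λ(V) ≠ 0, then λ ≥ κ(V) in the componentwise partial order on partitions. -/
import Mathlib


/- We model the paper's field `F((T)) = {∑_{i=-∞}^n v_i T^i}` by Mathlib's
`LaurentSeries F = HahnSeries ℤ F` via `T ↦ t⁻¹`: the paper's coefficient
`v_m` of `T^m` in `v` is `v.coeff (-m)` and the paper's degree is `-(order)`. -/

/-- A Maya diagram. -/
def IsMaya (M : Set ℤ) : Prop :=
  (M ∩ Set.Iic 0).Finite ∧ (Set.Ioi 0 \ M).Finite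

/-- Index of a Maya diagram. -/
noncomputable def mayaIndex (M : Set ℤ) (h : IsMaya M) : ℤ :=
  (h.1.toFinset.card : ℤ) - (h.2.toFinset.card : ℤ)

/-- `M(V)`, the set of (paper) degrees of nonzero elements of `V`. -/
def degSet {F : Type*} [Field F] (V : Submodule F (LaurentSeries F)) : Set ℤ :=
  {d | ∃ v ∈ V, v ≠ 0 ∧ -(v.order) = d}

/-- Let `V ∈ Gr^alg(F)` (i.e. `M(V)` is a Maya diagram) with
index `idx`, increasing enumeration `s` of `M(V)` and standard basis `v`:
`v i` is monic of degree `s i`, and `(v i)` has vanishing coefficient in degree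
`s j` for `i > j`.  Let `P` be the Plücker coordinate: for every partition
`lam`, `P lam` is the common value, for all large `n`, of the determinant
`det (v_{i, j − λ_j − i(V)})_{i,j=1}^n`.  Let `kap` be the partition `κ(V)`,
i.e. `κ_i = i − i(V) − s_i`.  Then `P κ(V) = 1`, and any partition `lam` with
`P lam ≠ 0` satisfies `lam ≥ κ(V)` componentwise. -/
theorem plucker_kappa_eq_one_and_support
    (F : Type*) [Field F] (V : Submodule F (LaurentSeries F))
    (hMaya : IsMaya (degSet V))
    (idx : ℤ) (hidx : idx = mayaIndex (degSet V) hMaya)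
    (s : ℕ → ℤ) (hs : StrictMono s) (hsM : Set.range s = degSet V)
    (v : ℕ → LaurentSeries F)
    (hvV : ∀ i, v i ∈ V)
    (hmonic : ∀ i, (v i).coeff (-(s i)) = 1)
    (hdeg : ∀ i, ∀ m : ℤ, s i < m → (v i).coeff (-m) = 0)
    (htri : ∀ i j, j < i → (v i).coeff (-(s j)) = 0)
    (P : (ℕ → ℕ) → F)
    (hP : ∀ lam : ℕ → ℕ, (∀ i, lam (i + 1) ≤ lam i) → (∃ N, ∀ i, N ≤ i → lam i = 0) →
      ∃ N, ∀ n, N ≤ n → P lam =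
        Matrix.det (Matrix.of fun i j : Fin n =>
          (v i).coeff (-(((j : ℤ) + 1) - (lam j : ℤ) - idx))))
    (kap : ℕ → ℕ) (hkap : ∀ i : ℕ, (kap i : ℤ) = (i : ℤ) + 1 - idx - s i) :
    P kap = 1 ∧
      ∀ lam : ℕ → ℕ, (∀ i, lam (i + 1) ≤ lam i) → (∃ N, ∀ i, N ≤ i → lam i = 0) →
        P lam ≠ 0 → ∀ i, kap i ≤ lam i := by
  classical
  -- s grows at least linearly
  have hslin : ∀ n : ℕ, s 0 + n ≤ s n := by
    intro n
    induction n with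
    | zero => simp
    | succ n ih =>
      have h2 : s n < s (n + 1) := hs (Nat.lt_succ_self n)
      push_cast
      omega
  -- kap is antitone
  have hksucc : ∀ i, kap (i + 1) ≤ kap i := by
    intro i
    have h2 : s i < s (i + 1) := hs (Nat.lt_succ_self i)
    have h3 := hkap i
    have h4 := hkap (i + 1)
    push_cast at h4
    omega
  have hkmono : ∀ i j : ℕ, i ≤ j → kap j ≤ kap i :=
    fun i j hij => antitone_nat_of_succ_le hksucc hij
  -- membership in degSet via s
  have hmem : ∀ x : ℤ, x ∈ degSet V ↔ ∃ k, s k = x := by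
    intro x
    rw [← hsM]
    exact ⟨fun ⟨k, hk⟩ => ⟨k, hk⟩, fun ⟨k, hk⟩ => ⟨k, hk⟩⟩
  -- kap is eventually zero (the counting argument)
  have hkap0 : ∃ n0 : ℕ, ∀ i, n0 ≤ i → kap i = 0 := by
    set A := hMaya.1.toFinset with hA
    set B := hMaya.2.toFinset with hB
    set c : ℕ := B.sup fun x => x.toNat with hc
    set n : ℕ := (c + 1 - s 0).toNat with hn
    have hsn : (c : ℤ) + 1 ≤ s n := by
      have h1 := hslin n
      have h2 : (c : ℤ) + 1 - s 0 ≤ ((c + 1 - s 0).toNat : ℤ) := Int.self_le_toNat _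
      omega
    have hBlt : ∀ x ∈ B, x < s n := by
      intro x hx
      have h1 : x.toNat ≤ c := Finset.le_sup (f := fun x : ℤ => x.toNat) hx
      have h2 : x ≤ (x.toNat : ℤ) := Int.self_le_toNat x
      omega
    have hsn_pos : 0 < s n := by
      have : (0 : ℤ) ≤ c := Int.natCast_nonneg c
      omega
    set T : Finset ℤ := (Finset.range (n + 1)).image s with hT
    have hTcard : T.card = n + 1 := by
      rw [hT, Finset.card_image_of_injective _ hs.injective, Finset.card_range]
    have hmemT : ∀ x : ℤ, x ∈ T ↔ ∃ k ≤ n, s k = x := by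
      intro x
      simp only [hT, Finset.mem_image, Finset.mem_range, Nat.lt_succ_iff]
    have hT1 : T.filter (fun x => x ≤ 0) = A := by
      ext x
      simp only [Finset.mem_filter, hA, Set.Finite.mem_toFinset, Set.mem_inter_iff,
        Set.mem_Iic, hmemT]
      constructor
      · rintro ⟨⟨k, -, hk⟩, hx0⟩
        exact ⟨(hmem x).2 ⟨k, hk⟩, hx0⟩
      · rintro ⟨hxM, hx0⟩
        obtain ⟨k, hk⟩ := (hmem x).1 hxM
        have : s k < s n := by omega
        have : k ≤ n := le_of_lt ((hs.lt_iff_lt).1 this)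
        exact ⟨⟨k, this, hk⟩, hx0⟩
    have hT2 : T.filter (fun x => ¬ x ≤ 0) = Finset.Ioc 0 (s n) \ B := by
      ext x
      simp only [Finset.mem_filter, hmemT, Finset.mem_sdiff, Finset.mem_Ioc, hB,
        Set.Finite.mem_toFinset, Set.mem_diff, Set.mem_Ioi, not_lt, not_and, not_not]
      constructor
      · rintro ⟨⟨k, hkn, hk⟩, hx0⟩
        have hxs : x ≤ s n := by
          have := hs.monotone hkn
          omega
        refine ⟨⟨by omega, hxs⟩, fun _ => (hmem x).2 ⟨k, hk⟩⟩
      · rintro ⟨⟨hx0, hxs⟩, hxnB⟩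
        obtain ⟨k, hk⟩ := (hmem x).1 (hxnB hx0)
        have : k ≤ n := (hs.le_iff_le).1 (by omega)
        exact ⟨⟨k, this, hk⟩, by omega⟩
    have hBsub : B ⊆ Finset.Ioc 0 (s n) := by
      intro x hx
      have h1 := hBlt x hx
      have h2 : x ∈ Set.Ioi 0 \ degSet V := (Set.Finite.mem_toFinset _).1 hx
      have h3 : (0 : ℤ) < x := h2.1
      simp only [Finset.mem_Ioc]
      omega
    have hcards : T.card = A.card + ((Finset.Ioc 0 (s n)).card - B.card) := by
      rw [← Finset.card_filter_add_card_filter_not (p := fun x : ℤ => x ≤ 0),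
        hT1, hT2, Finset.card_sdiff_of_subset hBsub]
    have hIoc : (Finset.Ioc 0 (s n)).card = (s n).toNat := by
      rw [Int.card_Ioc]
      simp
    have hBle : B.card ≤ (Finset.Ioc 0 (s n)).card := Finset.card_le_card hBsub
    have hidx' : idx = (A.card : ℤ) - (B.card : ℤ) := hidx
    have hkn : kap n = 0 := by
      have h1 := hkap n
      have h2 : ((s n).toNat : ℤ) = s n := Int.toNat_of_nonneg (le_of_lt hsn_pos)
      omega
    exact ⟨n, fun i hi => Nat.le_antisymm (hkn ▸ hkmono n i hi) (Nat.zero_le _)⟩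
  -- Part 1 : P kap = 1
  obtain ⟨n0, hn0⟩ := hkap0
  obtain ⟨N, hN⟩ := hP kap hksucc ⟨n0, hn0⟩
  have hPkap : P kap = 1 := by
    rw [hN N le_rfl]
    have hcol : ∀ (i j : Fin N),
        (Matrix.of fun i j : Fin N => (v i).coeff (-(((j : ℤ) + 1) - (kap j : ℤ) - idx))) i j
          = (v (i : ℕ)).coeff (-(s (j : ℕ))) := by
      intro i j
      have h := hkap (j : ℕ)
      simp only [Matrix.of_apply]
      congr 1
      push_cast
      omega
    rw [Matrix.det_of_upperTriangular (by
      intro i j hji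
      rw [hcol i j]
      exact htri i j hji)]
    apply Finset.prod_eq_one
    intro i _
    rw [hcol i i]
    exact hmonic i
  refine ⟨hPkap, ?_⟩
  -- Part 2
  intro lam hanti hzero hPl i0
  by_contra hlt
  push_neg at hlt
  have hlmono : ∀ i j : ℕ, i ≤ j → lam j ≤ lam i :=
    fun i j hij => antitone_nat_of_succ_le hanti hij
  obtain ⟨N', hN'⟩ := hP lam hanti hzero
  set n : ℕ := max N' (i0 + 1) with hn
  have hi0n : i0 < n := lt_of_lt_of_le (Nat.lt_succ_self i0) (le_max_right _ _)
  apply hPl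
  rw [hN' n (le_max_left _ _), Matrix.det_apply]
  apply Finset.sum_eq_zero
  intro σ _
  have hprod : (∏ i : Fin n,
      (Matrix.of fun i j : Fin n =>
        (v i).coeff (-(((j : ℤ) + 1) - (lam j : ℤ) - idx))) (σ i) i) = 0 := by
    by_contra hne
    have hall : ∀ j : Fin n,
        (v ((σ j : Fin n) : ℕ)).coeff (-(((j : ℤ) + 1) - (lam (j : ℕ) : ℤ) - idx)) ≠ 0 := by
      intro j
      intro hzero'
      apply hne
      apply Finset.prod_eq_zero (Finset.mem_univ j)
      simpa using hzero'
    -- for every j with i0 ≤ j, we get i0 < σ j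
    have hkey : ∀ j : Fin n, i0 ≤ (j : ℕ) → i0 < ((σ j : Fin n) : ℕ) := by
      intro j hj
      have h1 := hall j
      have h2 : ¬ s ((σ j : Fin n) : ℕ) < ((j : ℤ) + 1) - (lam (j : ℕ) : ℤ) - idx := by
        intro h
        exact h1 (hdeg _ _ h)
      push_neg at h2
      have h3 : lam (j : ℕ) ≤ lam i0 := hlmono i0 (j : ℕ) hj
      have h4 := hkap i0
      have h5 : s i0 < s ((σ j : Fin n) : ℕ) := by
        have hji : (i0 : ℤ) ≤ ((j : ℕ) : ℤ) := by exact_mod_cast hj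
        push_cast at h2
        omega
      exact (hs.lt_iff_lt).1 h5
    set S : Finset (Fin n) := Finset.univ.filter (fun j => i0 ≤ (j : ℕ)) with hS
    set S' : Finset (Fin n) := Finset.univ.filter (fun j => i0 < (j : ℕ)) with hS'
    have hmaps : ∀ j ∈ S, σ j ∈ S' := by
      intro j hj
      simp only [hS, Finset.mem_filter, Finset.mem_univ, true_and] at hj
      simp only [hS', Finset.mem_filter, Finset.mem_univ, true_and]
      exact hkey j hj
    have hle : S.card ≤ S'.card :=
      Finset.card_le_card_of_injOn σ hmaps (σ.injective.injOn)
    have hssub : S' ⊂ S := by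
      constructor
      · intro j hj
        simp only [hS', Finset.mem_filter, Finset.mem_univ, true_and] at hj
        simp only [hS, Finset.mem_filter, Finset.mem_univ, true_and]
        omega
      · intro hcon
        have : (⟨i0, hi0n⟩ : Fin n) ∈ S := by
          simp [hS]
        have := hcon this
        simp [hS'] at this
    have := Finset.card_lt_card hssub
    omega
  rw [hprod, smul_zero]
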